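/- Let τ ≥ 0 and let g : [0, τ] → [0, ∞) be Lebesgue measurable and integrable, and let M ≥ 0 satisfy g(r) ≤ M for almost every r ∈ [0, τ]. Then ( ∫₀^τ g(r) dr )² ≤ 2 M ∫₀^τ r·g(r) dr. -/

import Mathlib

open MeasureTheory

/-- Elementary one-dimensional inequality: if `g : [0,τ] → [0,∞)`
is measurable and integrable with `g ≤ M` a.e., then
`(∫₀^τ g(r) dr)² ≤ 2 M ∫₀^τ r·g(r) dr`. -/
theorem stmt9 (τ : ℝ) (hτ : 0 ≤ τ) (g : ℝ → ℝ) (M : ℝ) (hM : 0 ≤ M)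
    (hg : IntervalIntegrable g volume 0 τ)
    (hg0 : ∀ᵐ r ∂(volume.restrict (Set.Icc (0 : ℝ) τ)), 0 ≤ g r)
    (hgM : ∀ᵐ r ∂(volume.restrict (Set.Icc (0 : ℝ) τ)), g r ≤ M) :
    (∫ r in (0 : ℝ)..τ, g r) ^ 2 ≤ 2 * M * ∫ r in (0 : ℝ)..τ, r * g r := by
  set μ := volume.restrict (Set.Icc (0 : ℝ) τ) with hμ
  set g' : ℝ → ℝ := fun r => max (min (g r) M) 0 with hg'def
  have hg'0 : ∀ r, 0 ≤ g' r := fun r => le_max_right _ _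
  have hg'M : ∀ r, g' r ≤ M := fun r => max_le (min_le_right _ _) hM
  have hae : g =ᵐ[μ] g' := by
    filter_upwards [hg0, hgM] with r h0 hMr
    simp [g', min_eq_left hMr, max_eq_left h0]
  have hfin : IsFiniteMeasure μ := by
    constructor
    rw [hμ, Measure.restrict_apply_univ, Real.volume_Icc]
    exact ENNReal.ofReal_lt_top
  have hint : Integrable g μ := by
    have h1 : IntegrableOn g (Set.Icc 0 τ) volume := by
      rw [integrableOn_Icc_iff_integrableOn_Ioc]
      exact (intervalIntegrable_iff_integrableOn_Ioc_of_le hτ).mp hg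
    exact h1
  have hint' : Integrable g' μ := hint.congr hae
  -- G' bound
  have hG : ∀ r ∈ Set.Icc (0:ℝ) τ, ∫ s in Set.Icc (0:ℝ) r, g' s ≤ M * r := by
    intro r hr
    have hsub : Set.Icc (0:ℝ) r ⊆ Set.Icc (0:ℝ) τ :=
      Set.Icc_subset_Icc le_rfl hr.2
    have hIcc : IntegrableOn g' (Set.Icc (0:ℝ) τ) volume := hint'
    have hi : IntegrableOn g' (Set.Icc (0:ℝ) r) volume := hIcc.mono_set hsub
    calc ∫ s in Set.Icc (0:ℝ) r, g' s ≤ ∫ _ in Set.Icc (0:ℝ) r, M :=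
          setIntegral_mono_on hi ((integrableOn_const_iff (by simp)).2 (Or.inr (by
            rw [Real.volume_Icc]; exact ENNReal.ofReal_lt_top)))
            measurableSet_Icc (fun s _ => hg'M s)
      _ = M * r := by
          rw [setIntegral_const, Real.volume_real_Icc, smul_eq_mul,
            max_eq_left (by linarith [hr.1])]
          ring
  -- integrability of r * g' r
  have hrg : Integrable (fun r => r * g' r) μ := by
    refine Integrable.mono' (integrable_const (τ * M)) ?_ ?_
    · exact aestronglyMeasurable_id.mul hint'.aestronglyMeasurable
    · filter_upwards [ae_restrict_mem measurableSet_Icc] with r hr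
      rw [Real.norm_eq_abs, abs_mul, abs_of_nonneg hr.1, abs_of_nonneg (hg'0 r)]
      exact mul_le_mul hr.2 (hg'M r) (hg'0 r) hτ
  -- product setup
  set F : ℝ × ℝ → ℝ := fun p => g' p.1 * g' p.2 with hFdef
  have hF : Integrable F (μ.prod μ) := hint'.mul_prod hint'
  set T : Set (ℝ × ℝ) := {p | p.2 ≤ p.1} with hTdef
  have hTm : MeasurableSet T := measurableSet_le measurable_snd measurable_fst
  have hf1 : Integrable (T.indicator F) (μ.prod μ) := hF.indicator hTm
  have hf2 : Integrable (Tᶜ.indicator F) (μ.prod μ) := hF.indicator hTm.compl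
  have hsplit : ∫ p, F p ∂(μ.prod μ)
      = (∫ p, T.indicator F p ∂(μ.prod μ)) + ∫ p, Tᶜ.indicator F p ∂(μ.prod μ) := by
    rw [← integral_add hf1 hf2]
    congr 1
    ext p
    simp [Set.indicator_self_add_compl_apply]
  have hswap : ∫ p, Tᶜ.indicator F p ∂(μ.prod μ) ≤ ∫ p, T.indicator F p ∂(μ.prod μ) := by
    rw [← integral_prod_swap (Tᶜ.indicator F)]
    refine integral_mono hf2.swap hf1 ?_
    intro p
    simp only [Function.comp_apply, Set.indicator]
    by_cases h : p.swap ∈ Tᶜ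
    · have h1 : p ∈ T := by
        simp only [hTdef, Set.mem_compl_iff, Set.mem_setOf_eq, Prod.fst_swap, Prod.snd_swap,
          not_le] at h ⊢
        exact h.le
      simp only [h, h1, if_true]
      simp [hFdef, Prod.fst_swap, Prod.snd_swap, mul_comm]
    · simp only [h, if_false]
      split_ifs
      · exact mul_nonneg (hg'0 _) (hg'0 _)
      · exact le_rfl
  have hinner : ∀ᵐ r ∂μ, (∫ s, T.indicator F (r, s) ∂μ) ≤ M * (r * g' r) := by
    filter_upwards [ae_restrict_mem measurableSet_Icc] with r hr
    have h1 : (fun s => T.indicator F (r, s))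
        = (Set.Iic r).indicator (fun s => g' r * g' s) := by
      ext s
      simp only [Set.indicator, hTdef, Set.mem_setOf_eq, Set.mem_Iic, hFdef]
    rw [h1, integral_indicator measurableSet_Iic, hμ,
      Measure.restrict_restrict measurableSet_Iic]
    have hset : Set.Iic r ∩ Set.Icc (0:ℝ) τ = Set.Icc (0:ℝ) r := by
      ext s
      simp only [Set.mem_inter_iff, Set.mem_Iic, Set.mem_Icc]
      constructor
      · rintro ⟨h1, h2, h3⟩; exact ⟨h2, h1⟩
      · rintro ⟨h1, h2⟩; exact ⟨h2, h1, h2.trans hr.2⟩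
    rw [hset, integral_const_mul]
    calc g' r * ∫ s in Set.Icc (0:ℝ) r, g' s ≤ g' r * (M * r) :=
          mul_le_mul_of_nonneg_left (hG r hr) (hg'0 r)
      _ = M * (r * g' r) := by ring
  have hmain : ∫ p, T.indicator F p ∂(μ.prod μ) ≤ M * ∫ r, r * g' r ∂μ := by
    rw [integral_prod _ hf1]
    calc ∫ r, ∫ s, T.indicator F (r, s) ∂μ ∂μ ≤ ∫ r, M * (r * g' r) ∂μ :=
        integral_mono_ae hf1.integral_prod_left (hrg.const_mul M) hinner
      _ = M * ∫ r, r * g' r ∂μ := integral_const_mul M _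
  have hae2 : (fun r => r * g r) =ᵐ[μ] fun r => r * g' r :=
    hae.mono fun r h => by dsimp only; rw [h]
  have e1 : ∫ r in (0:ℝ)..τ, g r = ∫ r, g' r ∂μ := by
    rw [intervalIntegral.integral_of_le hτ, hμ, ← integral_Icc_eq_integral_Ioc]
    exact integral_congr_ae hae
  have e2 : ∫ r in (0:ℝ)..τ, r * g r = ∫ r, r * g' r ∂μ := by
    rw [intervalIntegral.integral_of_le hτ, hμ, ← integral_Icc_eq_integral_Ioc]
    exact integral_congr_ae hae2
  have hI2 : (∫ r, g' r ∂μ) ^ 2 = ∫ p, F p ∂(μ.prod μ) := by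
    have := integral_prod_mul (μ := μ) (ν := μ) g' g'
    rw [hFdef]
    rw [this]; ring
  rw [e1, e2, hI2, hsplit]
  linarith [hmain, hswap]
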